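/- Let Δ be a 2-local derivation on M_n(A), n ≥ 2, that vanishes on the linear span of the matrix units. Then Δ maps e_{i,i}M_n(A)e_{j,j} into itself for all i, j; moreover for x ∈ e_{i,i}M_n(A)e_{j,j} one has Δ(x) = e_{i,i}Δ(x)e_{j,j}. -/

import Mathlib

open Matrix

def IsDerivation {A : Type*} [Ring A] [Algebra ℂ A] (D : A → A) : Prop :=
  (∀ x y, D (x + y) = D x + D y) ∧ (∀ (c : ℂ) (x), D (c • x) = c • D x) ∧
  (∀ x y, D (x * y) = D x * y + x * D y)

def Is2LocalDerivation {A : Type*} [Ring A] [Algebra ℂ A] (Δ : A → A) : Prop :=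
  ∀ x y, ∃ D, IsDerivation D ∧ Δ x = D x ∧ Δ y = D y

def HasInnerDerivationProperty (A : Type*) [Ring A] [Algebra ℂ A] : Prop :=
  ∀ D : A → A, IsDerivation D → ∃ a : A, ∀ x, D x = a * x - x * a

/-- `Δ` vanishes on the linear span of the matrix units. -/
def VanishesOnUnits {A : Type*} [Ring A] [Algebra ℂ A] {n : ℕ}
    (Δ : Matrix (Fin n) (Fin n) A → Matrix (Fin n) (Fin n) A) : Prop :=
  ∀ x ∈ Submodule.span ℂ (Set.range fun p : Fin n × Fin n =>
      Matrix.single p.1 p.2 (1 : A)), Δ x = 0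

/-- Key computation: if a derivation kills `e` and `f`, and `x = e * x * f`,
then `D x = e * D x * f`. -/
lemma deriv_corner {B : Type*} [Ring B] [Algebra ℂ B] {D : B → B}
    (hD : IsDerivation D) {e f x : B} (he : D e = 0) (hf : D f = 0)
    (hx : x = e * x * f) : D x = e * D x * f := by
  obtain ⟨-, -, hmul⟩ := hD
  calc D x = D (e * (x * f)) := by rw [← mul_assoc, ← hx]
    _ = D e * (x * f) + e * D (x * f) := hmul _ _
    _ = e * (D x * f + x * D f) := by rw [he, hmul, zero_mul, zero_add]
    _ = e * D x * f := by rw [hf, mul_zero, add_zero, mul_assoc]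

theorem stmt6 {A : Type*} [NormedRing A] [NormedAlgebra ℂ A] [CompleteSpace A]
    {n : ℕ} (hn : 2 ≤ n)
    (Δ : Matrix (Fin n) (Fin n) A → Matrix (Fin n) (Fin n) A)
    (hΔ : Is2LocalDerivation Δ) (hvan : VanishesOnUnits Δ) :
    ∀ (i j : Fin n) (x : Matrix (Fin n) (Fin n) A),
      x = Matrix.single i i (1 : A) * x * Matrix.single j j (1 : A) →
      Δ x = Matrix.single i i (1 : A) * Δ x * Matrix.single j j (1 : A) := by
  intro i j x hx
  set e := Matrix.single i i (1 : A) with he_def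
  set f := Matrix.single j j (1 : A) with hf_def
  have hmem_e : e ∈ Submodule.span ℂ (Set.range fun p : Fin n × Fin n =>
      Matrix.single p.1 p.2 (1 : A)) :=
    Submodule.subset_span ⟨(i, i), rfl⟩
  have hmem_f : f ∈ Submodule.span ℂ (Set.range fun p : Fin n × Fin n =>
      Matrix.single p.1 p.2 (1 : A)) :=
    Submodule.subset_span ⟨(j, j), rfl⟩
  have hee : e * e = e := by
    rw [he_def, Matrix.single_mul_single_same, one_mul]
  by_cases hij : i = j
  · -- i = j : take D agreeing with Δ at x and e
    subst hij
    obtain ⟨D, hD, hDx, hDe⟩ := hΔ x e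
    have hDe0 : D e = 0 := by
      rw [← hDe]; exact hvan e hmem_e
    rw [hDx]
    exact deriv_corner hD hDe0 hDe0 hx
  · -- i ≠ j : take D agreeing with Δ at x and y = e + 2 • f
    have hef : e * f = 0 := by
      rw [he_def, hf_def]; exact Matrix.single_mul_single_of_ne (c := (1 : A)) i i j hij 1
    have hfe : f * e = 0 := by
      rw [he_def, hf_def]; exact Matrix.single_mul_single_of_ne (c := (1 : A)) j j i (Ne.symm hij) 1
    have hff : f * f = f := by
      rw [hf_def, Matrix.single_mul_single_same, one_mul]
    set y := e + (2 : ℂ) • f with hy_def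
    obtain ⟨D, hD, hDx, hDy⟩ := hΔ x y
    obtain ⟨hadd, hsmul, hmul⟩ := hD
    have hDy0 : D y = 0 := by
      rw [← hDy]
      exact hvan y (Submodule.add_mem _ hmem_e (Submodule.smul_mem _ _ hmem_f))
    -- y * y = e + 4 • f
    have hyy : y * y = e + (4 : ℂ) • f := by
      rw [hy_def]
      simp only [mul_add, add_mul, smul_mul_assoc, mul_smul_comm, hee, hef, hfe, hff,
        smul_zero, add_zero, zero_add, smul_smul]
      norm_num
    have h1 : D e + (2 : ℂ) • D f = 0 := by
      rw [← hsmul, ← hadd, ← hy_def, hDy0]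
    have h2 : D e + (4 : ℂ) • D f = 0 := by
      have := hmul y y
      rw [hDy0, zero_mul, mul_zero, add_zero, hyy, hadd, hsmul] at this
      rw [← this]
    have hDf0 : D f = 0 := by
      have h3 : ((4 : ℂ) - 2) • D f = 0 := by
        have h4 : (D e + (4 : ℂ) • D f) - (D e + (2 : ℂ) • D f) = 0 := by
          rw [h1, h2, sub_zero]
        rwa [add_sub_add_left_eq_sub, ← sub_smul] at h4
      rcases smul_eq_zero.mp h3 with h | h
      · exfalso; norm_num at h
      · exact h
    have hDe0 : D e = 0 := by
      have := h1
      rw [hDf0, smul_zero, add_zero] at this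
      exact this
    rw [hDx]
    exact deriv_corner ⟨hadd, hsmul, hmul⟩ hDe0 hDf0 hx
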